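/- Let (Q_i)_{i≥1} be i.i.d. real random variables on a probability space (Ω, F, P), and let r ∈ (0,∞) be such that E[e^{r·Q_1}] = 1 (an adjustment coefficient). Then for every u ∈ [0,∞): P(∃ n ≥ 1 : ∑_{i=1}^n Q_i > u) ≤ e^{−r·u} (the Lundberg bound). -/

import Mathlib

open MeasureTheory ProbabilityTheory

section Aux

variable {Ω : Type*} [MeasurableSpace Ω] (Q : ℕ → Ω → ℝ) (hmeas : ∀ i, Measurable (Q i))

/-- The filtration generated by `Q 0, ..., Q (n-1)`. -/
def lundbergFilt : Filtration ℕ (inferInstance : MeasurableSpace Ω) where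
  seq n := ⨆ i ∈ {k : ℕ | k < n}, MeasurableSpace.comap (Q i) inferInstance
  mono' i j hij := by
    refine iSup_le fun k => iSup_le fun hk => ?_
    exact le_iSup₂ (f := fun k (_ : k ∈ {k : ℕ | k < j}) => MeasurableSpace.comap (Q k)
      inferInstance) k (lt_of_lt_of_le hk hij)
  le' n := iSup₂_le fun k _ => (hmeas k).comap_le

end Aux

theorem lundberg_bound
    {Ω : Type*} [MeasurableSpace Ω] (P : Measure Ω) [IsProbabilityMeasure P]
    (Q : ℕ → Ω → ℝ) (hmeas : ∀ i, Measurable (Q i))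
    (hindep : iIndepFun Q P)
    (hident : ∀ i, Measure.map (Q i) P = Measure.map (Q 0) P)
    (r : ℝ) (hr : 0 < r)
    (hadj : ∫ ω, Real.exp (r * Q 0 ω) ∂P = 1) :
    ∀ u : ℝ, 0 ≤ u →
      (P {ω | ∃ n : ℕ, 1 ≤ n ∧ (∑ i ∈ Finset.range n, Q i ω) > u}).toReal
        ≤ Real.exp (-r * u) := by
  intro u hu
  -- the exponentiated increments
  set X : ℕ → Ω → ℝ := fun i ω => Real.exp (r * Q i ω) with hX
  have hg : Measurable fun x : ℝ => Real.exp (r * x) :=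
    Real.measurable_exp.comp (measurable_const.mul measurable_id)
  have hXmeas : ∀ i, Measurable (X i) := fun i => hg.comp (hmeas i)
  have hXindep : iIndepFun X P :=
    hindep.comp (fun _ x => Real.exp (r * x)) fun _ => hg
  -- integrability and mean 1 of each `X i`
  have hint0 : Integrable (X 0) P := by
    by_contra h
    rw [hX] at h
    simp only [integral_undef h] at hadj
    exact one_ne_zero hadj.symm
  have hXint : ∀ i, Integrable (X i) P := by
    intro i
    have : Integrable (fun x => Real.exp (r * x)) (Measure.map (Q i) P) := by
      rw [hident i]
      rwa [integrable_map_measure hg.aestronglyMeasurable (hmeas 0).aemeasurable]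
    rwa [integrable_map_measure hg.aestronglyMeasurable (hmeas i).aemeasurable] at this
  have hXmean : ∀ i, ∫ ω, X i ω ∂P = 1 := by
    intro i
    calc ∫ ω, X i ω ∂P = ∫ x, Real.exp (r * x) ∂(Measure.map (Q i) P) :=
          (integral_map (hmeas i).aemeasurable hg.aestronglyMeasurable).symm
      _ = ∫ x, Real.exp (r * x) ∂(Measure.map (Q 0) P) := by rw [hident i]
      _ = ∫ ω, Real.exp (r * Q 0 ω) ∂P :=
          integral_map (hmeas 0).aemeasurable hg.aestronglyMeasurable
      _ = 1 := hadj
  -- the exponential martingale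
  set f : ℕ → Ω → ℝ := fun n => ∏ i ∈ Finset.range n, X i with hf
  have hfint : ∀ n, Integrable (f n) P := by
    intro n
    induction n with
    | zero => simp only [hf, Finset.range_zero, Finset.prod_empty]; exact integrable_const (1 : ℝ)
    | succ n ih =>
      have hspl : f (n + 1) = f n * X n := by
        simp [hf, Finset.prod_range_succ]
      rw [hspl]
      exact (hXindep.indepFun_prod_range_succ hXmeas n).integrable_mul ih (hXint n)
  set ℱ := lundbergFilt Q hmeas with hℱ
  have hQF : ∀ n i, i < n → Measurable[ℱ n] (Q i) := by
    intro n i hi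
    have h1 : Measurable[MeasurableSpace.comap (Q i) inferInstance] (Q i) :=
      comap_measurable (Q i)
    exact h1.mono (le_iSup₂ (f := fun k (_ : k ∈ {k : ℕ | k < n}) =>
      MeasurableSpace.comap (Q k) inferInstance) i hi) le_rfl
  have hfapp : ∀ n ω, f n ω = ∏ i ∈ Finset.range n, X i ω := by
    intro n ω; simp [hf]
  have hadap : StronglyAdapted ℱ f := by
    intro n
    refine Measurable.stronglyMeasurable ?_
    have : Measurable[ℱ n] fun ω => ∏ i ∈ Finset.range n, X i ω :=
      Finset.measurable_prod _ fun i hi =>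
        hg.comp (hQF n i (Finset.mem_range.mp hi))
    convert this using 1
    ext ω; exact hfapp n ω
  have hcond : ∀ n, (P[X n | ℱ n]) =ᵐ[P] fun _ => (1 : ℝ) := by
    intro n
    have hsm : StronglyMeasurable[MeasurableSpace.comap (Q n) inferInstance] (X n) :=
      (hg.comp (comap_measurable (Q n))).stronglyMeasurable
    have hIndep : Indep (MeasurableSpace.comap (Q n) inferInstance) (ℱ n) P := by
      have : Indep (⨆ k ∈ ({n} : Set ℕ), MeasurableSpace.comap (Q k) inferInstance)
          (⨆ k ∈ {k : ℕ | k < n}, MeasurableSpace.comap (Q k) inferInstance) P := by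
        refine indep_iSup_of_disjoint (fun k => (hmeas k).comap_le) hindep ?_
        simp only [Set.disjoint_left, Set.mem_singleton_iff, Set.mem_setOf_eq]
        rintro k rfl
        exact lt_irrefl _
      rwa [iSup_singleton] at this
    have := condExp_indep_eq (μ := P) (hmeas n).comap_le (ℱ.le n) hsm hIndep
    refine this.trans ?_
    filter_upwards with ω
    simp [hXmean n]
  have hmart : Martingale f ℱ P := by
    refine martingale_nat hadap hfint fun n => ?_
    have hspl : f (n + 1) = f n * X n := by
      simp [hf, Finset.prod_range_succ]
    rw [hspl]
    have hpull := condExp_mul_of_stronglyMeasurable_left (μ := P) (m := ℱ n) (hadap n)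
      (by rw [← hspl]; exact hfint (n + 1)) (hXint n)
    refine Filter.EventuallyEq.trans ?_ hpull.symm
    filter_upwards [hcond n] with ω hω
    simp only [Pi.mul_apply, hω, mul_one]
  have hnonneg : 0 ≤ f := by
    intro n ω
    simp only [Pi.zero_apply, hfapp]
    exact Finset.prod_nonneg fun i _ => (Real.exp_pos _).le
  have hmean : ∀ n, ∫ ω, f n ω ∂P = 1 := by
    intro n
    induction n with
    | zero => simp [hfapp]
    | succ n ih =>
      have hspl : f (n + 1) = f n * X n := by
        simp [hf, Finset.prod_range_succ]
      calc ∫ ω, f (n + 1) ω ∂P = ∫ ω, (f n * X n) ω ∂P := by rw [hspl]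
        _ = (∫ ω, f n ω ∂P) * ∫ ω, X n ω ∂P :=
            (hXindep.indepFun_prod_range_succ hXmeas n).integral_mul_eq_mul_integral
              (hfint n).aestronglyMeasurable (hXint n).aestronglyMeasurable
        _ = 1 := by rw [ih, hXmean n, one_mul]
  -- Doob's maximal inequality
  set ε : NNReal := Real.toNNReal (Real.exp (r * u)) with hε
  set A : ℕ → Set Ω := fun n => {ω | (ε : ℝ) ≤
    (Finset.range (n + 1)).sup' Finset.nonempty_range_add_one fun k => f k ω} with hA
  have hεcoe : (ε : ℝ) = Real.exp (r * u) := Real.coe_toNNReal _ (Real.exp_pos _).le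
  have hεe : (ε : ENNReal) = ENNReal.ofReal (Real.exp (r * u)) := rfl
  set A : ℕ → Set Ω := fun n => {ω | (ε : ℝ) ≤
    (Finset.range (n + 1)).sup' Finset.nonempty_range_add_one fun k => f k ω} with hA
  have hdoob : ∀ n, P (A n) ≤ (ENNReal.ofReal (Real.exp (r * u)))⁻¹ := by
    intro n
    have h1 := maximal_ineq hmart.submartingale hnonneg (ε := ε) n
    have h2 : ∫ ω in A n, f n ω ∂P ≤ 1 := by
      rw [← hmean n]
      refine setIntegral_le_integral (hfint n) ?_
      filter_upwards with ω using hnonneg n ω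
    have h4 : (ε : ENNReal) * P (A n) ≤ 1 := by
      calc (ε : ENNReal) * P (A n) = ε • P (A n) := rfl
        _ ≤ ENNReal.ofReal (∫ ω in A n, f n ω ∂P) := h1
        _ ≤ ENNReal.ofReal 1 := ENNReal.ofReal_le_ofReal h2
        _ = 1 := ENNReal.ofReal_one
    rw [← hεe, ENNReal.le_inv_iff_mul_le, mul_comm]
    exact h4
  have hsub : {ω | ∃ n : ℕ, 1 ≤ n ∧ (∑ i ∈ Finset.range n, Q i ω) > u} ⊆ ⋃ n, A n := by
    rintro ω ⟨n, _, hn⟩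
    refine Set.mem_iUnion.mpr ⟨n, ?_⟩
    have hfn : f n ω = Real.exp (r * ∑ i ∈ Finset.range n, Q i ω) := by
      rw [hfapp, Finset.mul_sum, Real.exp_sum]
    have h5 : (ε : ℝ) ≤ f n ω := by
      rw [hεcoe, hfn]
      exact (Real.exp_le_exp.mpr (by nlinarith)).trans le_rfl
    exact h5.trans (Finset.le_sup' (fun k => f k ω) (Finset.self_mem_range_succ n))
  have hAmono : Monotone A := by
    intro n m hnm ω hω
    simp only [hA, Set.mem_setOf_eq] at hω ⊢
    exact le_trans hω (Finset.sup'_mono _ (Finset.range_subset_range.mpr (by omega)) _)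
  calc (P {ω | ∃ n : ℕ, 1 ≤ n ∧ (∑ i ∈ Finset.range n, Q i ω) > u}).toReal
      ≤ (P (⋃ n, A n)).toReal := by
        refine ENNReal.toReal_mono (measure_ne_top _ _) (measure_mono hsub)
    _ ≤ Real.exp (-r * u) := by
        refine ENNReal.toReal_le_of_le_ofReal (Real.exp_nonneg _) ?_
        rw [hAmono.directed_le.measure_iUnion]
        refine iSup_le fun n => (hdoob n).trans ?_
        rw [← ENNReal.ofReal_inv_of_pos (Real.exp_pos _), ← Real.exp_neg, neg_mul]
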